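/- Fix a real β > 0 and let g(x) = x·exp(−βx²/2). Then for all x ∈ ℝ, g'(x)·g'''(x) − (g''(x))² = −β·(β²x⁴ + 3)·exp(−βx²), which is strictly negative. Consequently, for every θ ∈ ℝ, every critical point x₀ of the function φ_θ := cos θ · g + sin θ · g' (i.e. every x₀ with φ_θ'(x₀) = 0) is non-degenerate: φ_θ''(x₀) ≠ 0. -/

import Mathlib

open Real

/-- `g(x) = x·exp(−βx²/2)`. -/
noncomputable def gfun (β : ℝ) (x : ℝ) : ℝ := x * Real.exp (-β * x ^ 2 / 2)

lemma hE (β x : ℝ) :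
    HasDerivAt (fun x : ℝ => Real.exp (-β * x ^ 2 / 2))
      (-β * x * Real.exp (-β * x ^ 2 / 2)) x := by
  have h : HasDerivAt (fun x : ℝ => -β * x ^ 2 / 2) (-β * x) x := by
    have := ((hasDerivAt_pow 2 x).const_mul (-β)).div_const 2
    refine this.congr_deriv ?_
    ring
  have := h.exp
  refine this.congr_deriv ?_
  ring

lemma d1 (β x : ℝ) :
    HasDerivAt (gfun β) ((1 - β * x ^ 2) * Real.exp (-β * x ^ 2 / 2)) x := by
  have := (hasDerivAt_id x).mul (hE β x)
  refine this.congr_deriv ?_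
  simp only [id_eq]
  ring

lemma d2 (β x : ℝ) :
    HasDerivAt (fun x => (1 - β * x ^ 2) * Real.exp (-β * x ^ 2 / 2))
      (β * x * (β * x ^ 2 - 3) * Real.exp (-β * x ^ 2 / 2)) x := by
  have hp : HasDerivAt (fun x : ℝ => 1 - β * x ^ 2) (-(β * (2 * x ^ 1))) x :=
    ((hasDerivAt_pow 2 x).const_mul β).const_sub 1
  have := hp.mul (hE β x)
  refine this.congr_deriv ?_
  ring

lemma d3 (β x : ℝ) :
    HasDerivAt (fun x => β * x * (β * x ^ 2 - 3) * Real.exp (-β * x ^ 2 / 2))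
      (β * (-β ^ 2 * x ^ 4 + 6 * β * x ^ 2 - 3) * Real.exp (-β * x ^ 2 / 2)) x := by
  have hp : HasDerivAt (fun x : ℝ => β * x * (β * x ^ 2 - 3))
      (β * 1 * (β * x ^ 2 - 3) + β * x * (β * (2 * x ^ 1))) x :=
    ((hasDerivAt_id x).const_mul β).mul (((hasDerivAt_pow 2 x).const_mul β).sub_const 3)
  have := hp.mul (hE β x)
  refine this.congr_deriv ?_
  ring

lemma hD1 (β : ℝ) :
    deriv (gfun β) = fun x => (1 - β * x ^ 2) * Real.exp (-β * x ^ 2 / 2) :=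
  funext fun x => (d1 β x).deriv

lemma hD2 (β : ℝ) :
    deriv (deriv (gfun β)) =
      fun x => β * x * (β * x ^ 2 - 3) * Real.exp (-β * x ^ 2 / 2) := by
  rw [hD1]
  exact funext fun x => (d2 β x).deriv

lemma hD3 (β : ℝ) :
    deriv (deriv (deriv (gfun β))) =
      fun x => β * (-β ^ 2 * x ^ 4 + 6 * β * x ^ 2 - 3) * Real.exp (-β * x ^ 2 / 2) := by
  rw [hD2]
  exact funext fun x => (d3 β x).deriv

theorem wronskian_neg_and_nondegenerate_critical_points (β : ℝ) (hβ : 0 < β) :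
    (∀ x : ℝ,
      deriv (gfun β) x * deriv (deriv (deriv (gfun β))) x -
          (deriv (deriv (gfun β)) x) ^ 2 =
        -β * (β ^ 2 * x ^ 4 + 3) * Real.exp (-β * x ^ 2)) ∧
    (∀ x : ℝ,
      deriv (gfun β) x * deriv (deriv (deriv (gfun β))) x -
          (deriv (deriv (gfun β)) x) ^ 2 < 0) ∧
    (∀ θ x₀ : ℝ,
      deriv (fun x => Real.cos θ * gfun β x + Real.sin θ * deriv (gfun β) x) x₀ = 0 →
      deriv (deriv
        (fun x => Real.cos θ * gfun β x + Real.sin θ * deriv (gfun β) x)) x₀ ≠ 0) := by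
  have key : ∀ x : ℝ,
      deriv (gfun β) x * deriv (deriv (deriv (gfun β))) x -
          (deriv (deriv (gfun β)) x) ^ 2 =
        -β * (β ^ 2 * x ^ 4 + 3) * Real.exp (-β * x ^ 2) := by
    intro x
    rw [hD3, hD2, hD1]
    have hexp : Real.exp (-β * x ^ 2 / 2) * Real.exp (-β * x ^ 2 / 2) =
        Real.exp (-β * x ^ 2) := by
      rw [← Real.exp_add]; ring_nf
    simp only []
    linear_combination (-β * (β ^ 2 * x ^ 4 + 3)) * hexp
  have neg : ∀ x : ℝ,
      deriv (gfun β) x * deriv (deriv (deriv (gfun β))) x -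
          (deriv (deriv (gfun β)) x) ^ 2 < 0 := by
    intro x
    rw [key x]
    have h1 : 0 < β * ((β ^ 2 * x ^ 4 + 3) * Real.exp (-β * x ^ 2)) := by positivity
    nlinarith
  refine ⟨key, neg, ?_⟩
  intro θ x₀ h0 h1
  set c := Real.cos θ
  set s := Real.sin θ
  have hφ : (fun x => c * gfun β x + s * deriv (gfun β) x) =
      fun x => c * gfun β x + s * ((1 - β * x ^ 2) * Real.exp (-β * x ^ 2 / 2)) := by
    rw [hD1]
  have hφ' : deriv (fun x => c * gfun β x + s * deriv (gfun β) x) =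
      fun x => c * ((1 - β * x ^ 2) * Real.exp (-β * x ^ 2 / 2)) +
        s * (β * x * (β * x ^ 2 - 3) * Real.exp (-β * x ^ 2 / 2)) := by
    rw [hφ]
    exact funext fun x => (((d1 β x).const_mul c).add ((d2 β x).const_mul s)).deriv
  have hφ'' : deriv (deriv (fun x => c * gfun β x + s * deriv (gfun β) x)) =
      fun x => c * (β * x * (β * x ^ 2 - 3) * Real.exp (-β * x ^ 2 / 2)) +
        s * (β * (-β ^ 2 * x ^ 4 + 6 * β * x ^ 2 - 3) * Real.exp (-β * x ^ 2 / 2)) := by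
    rw [hφ']
    exact funext fun x => (((d2 β x).const_mul c).add ((d3 β x).const_mul s)).deriv
  rw [hφ'] at h0
  rw [hφ''] at h1
  simp only at h0 h1
  set p := (1 - β * x₀ ^ 2) * Real.exp (-β * x₀ ^ 2 / 2) with hp
  set q := β * x₀ * (β * x₀ ^ 2 - 3) * Real.exp (-β * x₀ ^ 2 / 2) with hq
  set r := β * (-β ^ 2 * x₀ ^ 4 + 6 * β * x₀ ^ 2 - 3) * Real.exp (-β * x₀ ^ 2 / 2) with hr
  have hW : p * r - q ^ 2 < 0 := by
    have := neg x₀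
    rwa [hD3, hD2, hD1] at this
  have hcs : s ^ 2 + c ^ 2 = 1 := Real.sin_sq_add_cos_sq θ
  have : p * r - q ^ 2 = 0 := by
    linear_combination (c * r - s * q) * h0 + (s * p - c * q) * h1 +
      - (p * r - q ^ 2) * hcs
  linarith
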